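/- Let R be a commutative ring, f = t'_0⋯t'_m·v_1^d⋯v_r^d − π ∈ R[t'_0,…,t'_m,v_1,…,v_r] where π ∈ R is a nonzerodivisor, and let v = (v_1⋯v_r)^l for some l > 0. Then in the quotient ring B = R[t'_0,…,t'_m,v_1,…,v_r]/(f), the image of v is a nonzerodivisor: if v·g ∈ (f) for a polynomial g, then g ∈ (f). -/

import Mathlib

open MvPolynomial

private lemma divX_X_mul' {S : Type*} [CommRing S] (p : Polynomial S) :
    (Polynomial.X * p).divX = p := by
  ext n; simp [Polynomial.coeff_divX, Polynomial.coeff_X_mul]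

private lemma X_cancel {S : Type*} [CommRing S] {a b : Polynomial S}
    (h : Polynomial.X * a = Polynomial.X * b) : a = b := by
  ext n
  have := congrArg (Polynomial.coeff · (n + 1)) h
  simpa [Polynomial.coeff_X_mul] using this

private lemma key_poly {S : Type*} [CommRing S] (A π' : S) (hπ : π' ∈ nonZeroDivisors S)
    (d : ℕ) (g : Polynomial S)
    (h : (Polynomial.C A * Polynomial.X ^ d - Polynomial.C π') ∣ Polynomial.X * g) :
    (Polynomial.C A * Polynomial.X ^ d - Polynomial.C π') ∣ g := by
  obtain ⟨q, hq⟩ := h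
  rcases Nat.eq_zero_or_pos d with hd | hd
  · subst hd
    rw [pow_zero, mul_one, ← Polynomial.C_sub] at hq ⊢
    have : g = Polynomial.C (A - π') * q.divX := by
      have := congrArg Polynomial.divX hq
      rwa [divX_X_mul', Polynomial.divX_C_mul] at this
    exact ⟨q.divX, this⟩
  · have hc0 : q.coeff 0 = 0 := by
      have h0 := congrArg (Polynomial.coeff · 0) hq
      simp only [Polynomial.mul_coeff_zero, Polynomial.coeff_X_zero, zero_mul,
        Polynomial.coeff_sub, Polynomial.coeff_C_mul, Polynomial.coeff_X_pow,
        Polynomial.coeff_C_zero, if_neg hd.ne, mul_zero, zero_sub, neg_mul] at h0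
      exact hπ.2 _ (by linear_combination h0)
    have hq' : q = Polynomial.X * q.divX := by
      have := Polynomial.X_mul_divX_add q
      rw [hc0] at this; simpa using this.symm
    rw [hq'] at hq
    refine ⟨q.divX, X_cancel ?_⟩
    rw [hq]; ring

private lemma C_nzd {σ R : Type*} [CommRing R] {π : R} (hπ : π ∈ nonZeroDivisors R) :
    (C π : MvPolynomial σ R) ∈ nonZeroDivisors (MvPolynomial σ R) := by
  rw [mem_nonZeroDivisors_iff_right]; intro g hg
  rw [mul_comm] at hg
  ext mo
  have := congrArg (coeff mo) hg
  rw [coeff_C_mul, coeff_zero] at this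
  simpa using hπ.2 _ (by linear_combination this)

private lemma key_mv {R : Type} [CommRing R] (π : R) (hπ : π ∈ nonZeroDivisors R)
    (m r d : ℕ) (j : Fin r) (g : MvPolynomial (Fin (m + 1) ⊕ Fin r) R)
    (h : ((∏ i : Fin (m + 1), X (Sum.inl i)) *
        (∏ k : Fin r, (X (Sum.inr k) : MvPolynomial (Fin (m + 1) ⊕ Fin r) R) ^ d) - C π) ∣
        X (Sum.inr j) * g) :
    ((∏ i : Fin (m + 1), X (Sum.inl i)) *
        (∏ k : Fin r, (X (Sum.inr k) : MvPolynomial (Fin (m + 1) ⊕ Fin r) R) ^ d) - C π) ∣ g := by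
  have hστ : True := trivial
  set f : MvPolynomial (Fin (m + 1) ⊕ Fin r) R := (∏ i : Fin (m + 1), X (Sum.inl i)) *
      (∏ k : Fin r, (X (Sum.inr k) : MvPolynomial (Fin (m + 1) ⊕ Fin r) R) ^ d) - C π with hf
  let Φ : MvPolynomial (Fin (m + 1) ⊕ Fin r) R ≃ₐ[R] Polynomial (MvPolynomial {x : Fin (m + 1) ⊕ Fin r // x ≠ Sum.inr j} R) :=
    (renameEquiv R (Equiv.optionSubtypeNe (Sum.inr j : Fin (m + 1) ⊕ Fin r)).symm).trans (optionEquivLeft R {x : Fin (m + 1) ⊕ Fin r // x ≠ Sum.inr j})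
  have hΦX : Φ (X (Sum.inr j)) = Polynomial.X := by
    simp [Φ, renameEquiv_apply, rename_X, Equiv.optionSubtypeNe_symm_self,
      optionEquivLeft_X_none]
  have hΦC : Φ (C π) = Polynomial.C (C π) := by
    simp [Φ, renameEquiv_apply, rename_C, optionEquivLeft_C]
  have hΦother : ∀ (x : Fin (m + 1) ⊕ Fin r) (hx : x ≠ Sum.inr j),
      Φ (X x) = Polynomial.C (X (⟨x, hx⟩ )) := by
    intro x hx
    simp [Φ, renameEquiv_apply, rename_X, Equiv.optionSubtypeNe_symm_of_ne hx,
      optionEquivLeft_X_some]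
  have hmem : Φ ((∏ i : Fin (m + 1), X (Sum.inl i)) *
      ∏ k ∈ Finset.univ.erase j, (X (Sum.inr k) : MvPolynomial (Fin (m + 1) ⊕ Fin r) R) ^ d) ∈
      (Polynomial.C : MvPolynomial {x : Fin (m + 1) ⊕ Fin r // x ≠ Sum.inr j} R →+* Polynomial (MvPolynomial {x : Fin (m + 1) ⊕ Fin r // x ≠ Sum.inr j} R)).range := by
    rw [map_mul, map_prod, map_prod]
    refine Subring.mul_mem _ (Subring.prod_mem _ fun i _ => ?_)
      (Subring.prod_mem _ fun k hk => ?_)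
    · rw [hΦother (Sum.inl i) (by simp)]
      exact RingHom.mem_range_self _ _
    · rw [map_pow, hΦother (Sum.inr k)
        (by simpa using (Finset.mem_erase.mp hk).1)]
      exact Subring.pow_mem _ (RingHom.mem_range_self _ _) _
  obtain ⟨A, hA⟩ := hmem
  have hsplit : f = ((∏ i : Fin (m + 1), X (Sum.inl i)) *
      ∏ k ∈ Finset.univ.erase j, (X (Sum.inr k) : MvPolynomial (Fin (m + 1) ⊕ Fin r) R) ^ d) *
      (X (Sum.inr j)) ^ d - C π := by
    rw [hf, ← Finset.mul_prod_erase Finset.univ _ (Finset.mem_univ j)]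
    ring
  have hΦf : Φ f = Polynomial.C A * Polynomial.X ^ d - Polynomial.C (C π) := by
    rw [hsplit, map_sub, map_mul, map_pow, hΦX, hΦC, hA]
  have hdvd : Φ f ∣ Polynomial.X * Φ g := by
    rw [← hΦX, ← map_mul]
    exact map_dvd Φ h
  rw [hΦf] at hdvd
  have := key_poly A (C π) (C_nzd (σ := {x : Fin (m + 1) ⊕ Fin r // x ≠ Sum.inr j}) hπ) d (Φ g) hdvd
  rw [← hΦf] at this
  simpa using map_dvd Φ.symm this


/-- in `B = R[t'₀,…,t'_m,v₁,…,v_r]/(f)` with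
`f = t'₀⋯t'_m·v₁^d⋯v_r^d − π`, `π ∈ R` a nonzerodivisor, the image of `v = (v₁⋯v_r)^l`
(`l > 0`) is a nonzerodivisor: if `v·g ∈ (f)` then `g ∈ (f)`. -/
theorem stmt10 (R : Type) [CommRing R] (π : R) (hπ : π ∈ nonZeroDivisors R)
    (m r d l : ℕ) (hl : 0 < l)
    (f : MvPolynomial (Fin (m + 1) ⊕ Fin r) R)
    (hf : f = (∏ i : Fin (m + 1), X (Sum.inl i)) *
        (∏ j : Fin r, (X (Sum.inr j) : MvPolynomial (Fin (m + 1) ⊕ Fin r) R) ^ d) - C π)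
    (v : MvPolynomial (Fin (m + 1) ⊕ Fin r) R)
    (hv : v = (∏ j : Fin r, X (Sum.inr j)) ^ l) :
    ∀ g : MvPolynomial (Fin (m + 1) ⊕ Fin r) R,
      v * g ∈ Ideal.span {f} → g ∈ Ideal.span {f} := by
  subst hf hv
  intro g hg
  rw [Ideal.mem_span_singleton] at hg ⊢
  have key : ∀ (j : Fin r) (g : MvPolynomial (Fin (m + 1) ⊕ Fin r) R),
      ((∏ i : Fin (m + 1), X (Sum.inl i)) *
        (∏ k : Fin r, (X (Sum.inr k) : MvPolynomial (Fin (m + 1) ⊕ Fin r) R) ^ d) - C π) ∣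
        X (Sum.inr j) * g →
      ((∏ i : Fin (m + 1), X (Sum.inl i)) *
        (∏ k : Fin r, (X (Sum.inr k) : MvPolynomial (Fin (m + 1) ⊕ Fin r) R) ^ d) - C π) ∣ g :=
    fun j g h => key_mv π hπ m r d j g h
  have prodkey : ∀ (s : Finset (Fin r)) (g : MvPolynomial (Fin (m + 1) ⊕ Fin r) R),
      ((∏ i : Fin (m + 1), X (Sum.inl i)) *
        (∏ k : Fin r, (X (Sum.inr k) : MvPolynomial (Fin (m + 1) ⊕ Fin r) R) ^ d) - C π) ∣
        (∏ k ∈ s, X (Sum.inr k)) * g →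
      ((∏ i : Fin (m + 1), X (Sum.inl i)) *
        (∏ k : Fin r, (X (Sum.inr k) : MvPolynomial (Fin (m + 1) ⊕ Fin r) R) ^ d) - C π) ∣ g := by
    intro s
    induction s using Finset.induction_on with
    | empty => intro g hg; simpa using hg
    | insert _ _ hx ih =>
      intro g hg
      rw [Finset.prod_insert hx, mul_assoc] at hg
      exact ih _ (key _ _ hg)
  have powkey : ∀ (n : ℕ) (g : MvPolynomial (Fin (m + 1) ⊕ Fin r) R),
      ((∏ i : Fin (m + 1), X (Sum.inl i)) *
        (∏ k : Fin r, (X (Sum.inr k) : MvPolynomial (Fin (m + 1) ⊕ Fin r) R) ^ d) - C π) ∣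
        (∏ k : Fin r, X (Sum.inr k)) ^ n * g →
      ((∏ i : Fin (m + 1), X (Sum.inl i)) *
        (∏ k : Fin r, (X (Sum.inr k) : MvPolynomial (Fin (m + 1) ⊕ Fin r) R) ^ d) - C π) ∣ g := by
    intro n
    induction n with
    | zero => intro g hg; simpa using hg
    | succ n ih =>
      intro g hg
      rw [pow_succ, mul_assoc] at hg
      exact prodkey Finset.univ _ (ih _ hg)
  exact powkey l g hg
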